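/- arXiv:1403.4382 — 2 statements merged into one kernel-verified Lean document; each statement's English description precedes it below -/
import Mathlib

section
/- For any $\delta > 0$ there exists a constant $C > 0$ such that for all $\zeta$ with $|\arg\zeta| < \pi - \delta$ and $|\zeta| \geq 1$: $\left|\sum_{k=1}^{\infty} \frac{c_k}{\zeta+\gamma_k} - \int_1^{\infty} \frac{A}{t^{\alpha}(\zeta + Bt^{\beta})}\, dt\right| \leq \frac{C}{|\zeta|}$, where $c_k = A/k^{\alpha} + O(1/k^{\alpha+1})$ and $\gamma_k = Bk^{\beta} + O(k^{\beta-1})$. -/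
open MeasureTheory

section Stmt14Aux
open Real Set


lemma aux_sector {δ : ℝ} (hδ : 0 < δ) (hδπ : δ < π) {ζ : ℂ}
    (harg : |ζ.arg| ≤ π - δ) (hζ : 1 ≤ ‖ζ‖) {s : ℝ} (hs : 0 ≤ s) :
    Real.sqrt ((1 - Real.cos δ)/2) * (‖ζ‖ + s) ≤ ‖ζ + s‖ := by
  have hζ0 : ζ ≠ 0 := by
    intro h; rw [h] at hζ; simp at hζ; linarith
  have hx0 : 0 < ‖ζ‖ := lt_of_lt_of_le one_pos hζ
  set x := ‖ζ‖ with hxdef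
  have hc1 : Real.cos δ < 1 := by
    have := Real.strictAntiOn_cos (by constructor <;> [rfl; exact Real.pi_pos.le])
      (by constructor <;> linarith) hδ
    simpa using this
  have hc2 : -1 ≤ Real.cos δ := Real.neg_one_le_cos δ
  have hre : -Real.cos δ * x ≤ ζ.re := by
    have hcos : Real.cos (π - δ) ≤ Real.cos |ζ.arg| :=
      Real.cos_le_cos_of_nonneg_of_le_pi (abs_nonneg _) (by linarith) harg
    rw [Real.cos_abs, Real.cos_pi_sub] at hcos
    have harg2 : Real.cos ζ.arg = ζ.re / x := by
      rw [Complex.cos_arg hζ0]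
    rw [harg2] at hcos
    have := mul_le_mul_of_nonneg_right hcos hx0.le
    rwa [div_mul_cancel₀ _ hx0.ne'] at this
  have hm2 : Real.sqrt ((1 - Real.cos δ)/2) ^ 2 = (1 - Real.cos δ)/2 :=
    Real.sq_sqrt (by linarith)
  have hmnn : 0 ≤ Real.sqrt ((1 - Real.cos δ)/2) := Real.sqrt_nonneg _
  have hxsq : x ^ 2 = ζ.re^2 + ζ.im^2 := by
    rw [hxdef, Complex.sq_norm, Complex.normSq_apply]; ring
  have hnormsq : ‖ζ + (s:ℂ)‖ ^ 2 = x^2 + 2*s*ζ.re + s^2 := by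
    rw [Complex.sq_norm, Complex.normSq_apply]
    simp only [Complex.add_re, Complex.add_im, Complex.ofReal_re, Complex.ofReal_im]
    nlinarith [hxsq]
  have hsq : (Real.sqrt ((1 - Real.cos δ)/2) * (x + s))^2 ≤ ‖ζ + (s:ℂ)‖^2 := by
    rw [mul_pow, hm2, hnormsq]
    nlinarith [sq_nonneg (x - s), mul_le_mul_of_nonneg_left hre (by linarith : (0:ℝ) ≤ 2*s)]
  have h1 : 0 ≤ Real.sqrt ((1 - Real.cos δ)/2) * (x + s) := by positivity
  nlinarith [norm_nonneg (ζ + (s:ℂ))]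


lemma aux_deriv (A B α β : ℝ) (ζ : ℂ) (hnz : ∀ s : ℝ, 0 ≤ s → ζ + (s:ℂ) ≠ 0)
    (hB : 0 < B) {t : ℝ} (ht : 0 < t) :
    HasDerivAt (fun t : ℝ => (A : ℂ) / (((t ^ α : ℝ) : ℂ) * (ζ + ((B * t ^ β : ℝ) : ℂ))))
      ((0 * (((t ^ α : ℝ) : ℂ) * (ζ + ((B * t ^ β : ℝ) : ℂ))) -
         (A:ℂ) * ((((α * t ^ (α-1) : ℝ) : ℂ)) * (ζ + ((B * t ^ β : ℝ) : ℂ)) +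
            ((t ^ α : ℝ) : ℂ) * (((B * (β * t ^ (β-1)) : ℝ) : ℂ)))) /
        ((((t ^ α : ℝ) : ℂ) * (ζ + ((B * t ^ β : ℝ) : ℂ))) ^ 2)) t := by
  have hu : HasDerivAt (fun t : ℝ => (((t ^ α : ℝ)) : ℂ)) (((α * t ^ (α-1) : ℝ) : ℂ)) t :=
    (Real.hasDerivAt_rpow_const (Or.inl ht.ne')).ofReal_comp
  have hv : HasDerivAt (fun t : ℝ => ζ + (((B * t ^ β : ℝ)) : ℂ)) (((B * (β * t ^ (β-1)) : ℝ) : ℂ)) t := by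
    have h1 : HasDerivAt (fun t : ℝ => B * t ^ β) (B * (β * t ^ (β-1))) t :=
      (Real.hasDerivAt_rpow_const (Or.inl ht.ne')).const_mul B
    exact (h1.ofReal_comp).const_add ζ
  have hw := hu.mul hv
  have hden : (((t ^ α : ℝ) : ℂ) * (ζ + ((B * t ^ β : ℝ) : ℂ))) ≠ 0 := by
    apply mul_ne_zero
    · simp only [ne_eq, Complex.ofReal_eq_zero]
      positivity
    · exact hnz _ (by positivity)
  have := (hasDerivAt_const t (A:ℂ)).div hw hden
  convert this using 1
  all_goals rfl

lemma aux_deriv_bound (A B α β m x : ℝ) (hA : 0 < A) (hB : 0 < B) (hα0 : 0 < α)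
    (hβ : 0 < β) (hm : 0 < m) (hx : 1 ≤ x) (ζ : ℂ) (hxζ : x = ‖ζ‖)
    (hsec : ∀ s : ℝ, 0 ≤ s → m * (x + s) ≤ ‖ζ + (s:ℂ)‖) {t : ℝ} (ht : 1 ≤ t) :
    ‖(0 * (((t ^ α : ℝ) : ℂ) * (ζ + ((B * t ^ β : ℝ) : ℂ))) -
         (A:ℂ) * ((((α * t ^ (α-1) : ℝ) : ℂ)) * (ζ + ((B * t ^ β : ℝ) : ℂ)) +
            ((t ^ α : ℝ) : ℂ) * (((B * (β * t ^ (β-1)) : ℝ) : ℂ)))) /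
        ((((t ^ α : ℝ) : ℂ) * (ζ + ((B * t ^ β : ℝ) : ℂ))) ^ 2)‖
      ≤ (A*α/m + A*β/m^2) * (t^(-α-1)/x) := by
  have ht0 : 0 < t := lt_of_lt_of_le one_pos ht
  have hx0 : 0 < x := lt_of_lt_of_le one_pos hx
  set p : ℝ := t ^ α with hp
  set q : ℝ := ‖ζ + ((B * t ^ β : ℝ):ℂ)‖ with hq
  have hp0 : 0 < p := Real.rpow_pos_of_pos ht0 _
  have htβ : 0 < B * t ^ β := by positivity
  have hq1 : m * x ≤ q := le_trans (by nlinarith) (hsec _ htβ.le)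
  have hq2 : m * (B * t ^ β) ≤ q := le_trans (by nlinarith) (hsec _ htβ.le)
  have hq0 : 0 < q := lt_of_lt_of_le (by positivity) hq1
  have hqq : (m * x) * (m * (B * t ^ β)) ≤ q ^ 2 := by
    rw [sq]; exact mul_le_mul hq1 hq2 (by positivity) hq0.le
  set P1 : ℝ := t ^ (-α - 1) with hP1
  have hP10 : 0 < P1 := Real.rpow_pos_of_pos ht0 _
  have e1 : t ^ (α - 1) = P1 * (p * p) := by
    rw [hP1, hp, ← Real.rpow_add ht0, ← Real.rpow_add ht0]
    congr 1; ring
  have e2 : t ^ (β - 1) = P1 * (p * t ^ β) := by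
    rw [hP1, hp, ← Real.rpow_add ht0, ← Real.rpow_add ht0]
    congr 1; ring
  -- compute the norm
  have hnorm : ‖(0 * (((t ^ α : ℝ) : ℂ) * (ζ + ((B * t ^ β : ℝ) : ℂ))) -
         (A:ℂ) * ((((α * t ^ (α-1) : ℝ) : ℂ)) * (ζ + ((B * t ^ β : ℝ) : ℂ)) +
            ((t ^ α : ℝ) : ℂ) * (((B * (β * t ^ (β-1)) : ℝ) : ℂ)))) /
        ((((t ^ α : ℝ) : ℂ) * (ζ + ((B * t ^ β : ℝ) : ℂ))) ^ 2)‖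
      ≤ A * (α * t^(α-1) * q + p * (B * (β * t^(β-1)))) / (p * q)^2 := by
    rw [norm_div, zero_mul, zero_sub, norm_neg, norm_mul]
    have hden : ‖((((t ^ α : ℝ) : ℂ) * (ζ + ((B * t ^ β : ℝ) : ℂ)))) ^ 2‖ = (p*q)^2 := by
      rw [norm_pow, norm_mul, Complex.norm_real, Real.norm_of_nonneg hp0.le]
    rw [hden]
    apply div_le_div_of_nonneg_right ?_ (by positivity)
    calc ‖(A:ℂ)‖ * ‖(((α * t ^ (α-1) : ℝ):ℂ)) * (ζ + ((B * t ^ β : ℝ) : ℂ)) +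
            ((t ^ α : ℝ) : ℂ) * (((B * (β * t ^ (β-1)) : ℝ) : ℂ))‖
        ≤ ‖(A:ℂ)‖ * (‖(((α * t ^ (α-1) : ℝ):ℂ))‖ * ‖ζ + ((B * t ^ β : ℝ) : ℂ)‖ +
            ‖(((t ^ α : ℝ)):ℂ)‖ * ‖(((B * (β * t ^ (β-1)) : ℝ) : ℂ))‖) := by
          gcongr
          exact le_trans (norm_add_le _ _) (by rw [norm_mul, norm_mul])
      _ = A * (α * t^(α-1) * q + p * (B * (β * t^(β-1)))) := by
          simp only [Complex.norm_real, Real.norm_eq_abs]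
          rw [abs_of_pos hA, abs_of_pos (by positivity : (0:ℝ) < α * t ^ (α-1)),
            abs_of_pos hp0, abs_of_pos (by positivity : (0:ℝ) < B * (β * t ^ (β-1)))]
  refine le_trans hnorm ?_
  have split : A * (α * t^(α-1) * q + p * (B * (β * t^(β-1)))) / (p*q)^2
      = A*(α * t^(α-1) * q)/(p*q)^2 + A*(p * (B * (β * t^(β-1))))/(p*q)^2 := by
    ring
  rw [split]
  have t1 : A*(α * t^(α-1) * q)/(p*q)^2 = (A*α*P1)/q := by
    rw [e1]; field_simp
  have t2 : A*(p * (B * (β * t^(β-1))))/(p*q)^2 = (A*B*β*(P1 * t^β))/(q^2) := by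
    rw [e2]; field_simp
  rw [t1, t2]
  have b1 : (A*α*P1)/q ≤ A*α/m * (P1/x) := by
    calc (A*α*P1)/q ≤ (A*α*P1)/(m*x) :=
          div_le_div_of_nonneg_left (by positivity) (by positivity) hq1
      _ = A*α/m * (P1/x) := by first | (field_simp; ring) | field_simp
  have b2 : (A*B*β*(P1 * t^β))/(q^2) ≤ A*β/m^2 * (P1/x) := by
    calc (A*B*β*(P1 * t^β))/(q^2) ≤ (A*B*β*(P1 * t^β))/((m*x)*(m*(B*t^β))) :=
          div_le_div_of_nonneg_left (by positivity) (by positivity) hqq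
      _ = A*β/m^2 * (P1/x) := by first | (field_simp; ring) | field_simp
  calc (A*α*P1)/q + (A*B*β*(P1 * t^β))/(q^2)
      ≤ A*α/m * (P1/x) + A*β/m^2 * (P1/x) := add_le_add b1 b2
    _ = (A*α/m + A*β/m^2) * (P1/x) := by ring

lemma aux_term (A B α β m x Cc Cγ : ℝ) (hA : 0 < A) (hB : 0 < B) (hα0 : 0 < α)
    (hβ : 0 < β) (hm : 0 < m) (hx : 1 ≤ x) (hCc : 0 ≤ Cc) (hCγ : 0 ≤ Cγ)
    (ζ : ℂ) (hxζ : x = ‖ζ‖) (hsec : ∀ s : ℝ, 0 ≤ s → m * (x + s) ≤ ‖ζ + (s:ℂ)‖)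
    (ck γk n : ℝ) (hγk : 0 < γk) (hn : 1 ≤ n)
    (hcak : |ck - A / n ^ α| ≤ Cc / n ^ (α+1)) (hγak : |γk - B * n ^ β| ≤ Cγ * n ^ (β-1))
    (hint : IntegrableOn (fun t : ℝ => (A:ℂ)/(((t^α : ℝ):ℂ)*(ζ+((B*t^β : ℝ):ℂ)))) (Ioc n (n+1)) volume) :
    ‖(ck:ℂ)/(ζ+(γk:ℂ)) - ∫ t in Ioc n (n+1), (A:ℂ)/(((t^α : ℝ):ℂ)*(ζ+((B*t^β : ℝ):ℂ)))‖
      ≤ (Cc/m + A*Cγ/(m^2*B) + (A*α/m + A*β/m^2)) * (n^(-α-1)/x) := by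
  have hx0 : 0 < x := lt_of_lt_of_le one_pos hx
  have hn0 : 0 < n := lt_of_lt_of_le one_pos hn
  have hnz : ∀ s : ℝ, 0 ≤ s → ζ + (s:ℂ) ≠ 0 := by
    intro s hs h0
    have := hsec s hs
    rw [h0] at this; simp at this; nlinarith
  set F : ℝ → ℂ := fun t => (A:ℂ)/(((t^α : ℝ):ℂ)*(ζ+((B*t^β : ℝ):ℂ))) with hF
  have hninv : n^(-α-1) = (n^(α+1))⁻¹ := by
    rw [show -α-1 = -(α+1) by ring, Real.rpow_neg hn0.le]
  have hw1 : m * x ≤ ‖ζ+(γk:ℂ)‖ := le_trans (by nlinarith) (hsec γk hγk.le)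
  have hw2 : m * x ≤ ‖ζ+((B*n^β : ℝ):ℂ)‖ := by
    have hb : (0:ℝ) < B * n^β := by positivity
    exact le_trans (by nlinarith) (hsec _ hb.le)
  have hw2' : m * (B*n^β) ≤ ‖ζ+((B*n^β : ℝ):ℂ)‖ := by
    have hb : (0:ℝ) < B * n^β := by positivity
    exact le_trans (by nlinarith) (hsec _ hb.le)
  have hnα : (0:ℝ) < n ^ α := Real.rpow_pos_of_pos hn0 _
  have hnβ : (0:ℝ) < n ^ β := Real.rpow_pos_of_pos hn0 _
  -- part (a)
  have ha : ‖(ck:ℂ)/(ζ+(γk:ℂ)) - ((A/n^α : ℝ):ℂ)/(ζ+(γk:ℂ))‖ ≤ (Cc/m)*(n^(-α-1)/x) := by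
    rw [div_sub_div_same, ← Complex.ofReal_sub, norm_div, Complex.norm_real, Real.norm_eq_abs]
    calc |ck - A/n^α| / ‖ζ+(γk:ℂ)‖ ≤ (Cc/n^(α+1))/(m*x) :=
          div_le_div₀ (by positivity) hcak (by positivity) hw1
      _ = (Cc/m)*(n^(-α-1)/x) := by rw [hninv]; ring
  -- part (b)
  have hu0 : ((n^α : ℝ):ℂ) ≠ 0 := by simp only [ne_eq, Complex.ofReal_eq_zero]; positivity
  have hw10 : ζ+(γk:ℂ) ≠ 0 := hnz _ hγk.le
  have hw20 : ζ+((B*n^β : ℝ):ℂ) ≠ 0 := hnz _ (by positivity)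
  have hb : ‖((A/n^α : ℝ):ℂ)/(ζ+(γk:ℂ)) - F n‖ ≤ (A*Cγ/(m^2*B))*(n^(-α-1)/x) := by
    have hgen : ∀ u w1 w2 : ℂ, u ≠ 0 → w1 ≠ 0 → w2 ≠ 0 →
        (A:ℂ)/(u*w1) - (A:ℂ)/(u*w2) = (A:ℂ)*(w2-w1)/(u*(w1*w2)) := by
      intro u w1 w2 h1 h2 h3; field_simp
    have heq : ((A/n^α : ℝ):ℂ)/(ζ+(γk:ℂ)) - F n
        = (A:ℂ) * ((((B*n^β - γk : ℝ)):ℂ)) / (((n^α : ℝ):ℂ) * ((ζ+(γk:ℂ)) * (ζ+((B*n^β : ℝ):ℂ)))) := by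
      have h0 : ((A/n^α : ℝ):ℂ)/(ζ+(γk:ℂ)) = (A:ℂ)/(((n^α : ℝ):ℂ)*(ζ+(γk:ℂ))) := by
        push_cast; rw [div_div]
      have h1 : F n = (A:ℂ)/(((n^α : ℝ):ℂ)*(ζ+((B*n^β : ℝ):ℂ))) := rfl
      rw [h0, h1, hgen _ _ _ hu0 hw10 hw20]
      push_cast; ring
    rw [heq]
    rw [norm_div, norm_mul, norm_mul, norm_mul, Complex.norm_real, Complex.norm_real,
      Complex.norm_real, Real.norm_eq_abs, Real.norm_eq_abs, Real.norm_eq_abs,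
      abs_of_pos hA, abs_of_pos hnα]
    calc A * |B*n^β - γk| / (n^α * (‖ζ+(γk:ℂ)‖ * ‖ζ+((B*n^β : ℝ):ℂ)‖))
        ≤ A * (Cγ * n^(β-1)) / (n^α * ((m*x) * (m*(B*n^β)))) := by
          apply div_le_div₀ (by positivity) ?_ (by positivity) ?_
          · have : |B*n^β - γk| ≤ Cγ * n^(β-1) := by
              rw [show B*n^β - γk = -(γk - B*n^β) by ring, abs_neg]; exact hγak
            nlinarith
          · apply mul_le_mul_of_nonneg_left ?_ hnα.le
            apply mul_le_mul hw1 hw2' (by positivity) (norm_nonneg _)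
      _ = (A*Cγ/(m^2*B))*(n^(-α-1)/x) := by
          have e3 : n^(β-1) = n^(-α-1) * (n^α * n^β) := by
            rw [← Real.rpow_add hn0, ← Real.rpow_add hn0]; congr 1; ring
          rw [e3]; field_simp
  -- part (c)
  have hc : ‖F n - ∫ t in Ioc n (n+1), F t‖ ≤ ((A*α/m + A*β/m^2))*(n^(-α-1)/x) := by
    set D0 := A*α/m + A*β/m^2 with hD0
    set F' : ℝ → ℂ := fun t => ((0 * (((t ^ α : ℝ) : ℂ) * (ζ + ((B * t ^ β : ℝ) : ℂ))) -
         (A:ℂ) * ((((α * t ^ (α-1) : ℝ) : ℂ)) * (ζ + ((B * t ^ β : ℝ) : ℂ)) +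
            ((t ^ α : ℝ) : ℂ) * (((B * (β * t ^ (β-1)) : ℝ) : ℂ)))) /
        ((((t ^ α : ℝ) : ℂ) * (ζ + ((B * t ^ β : ℝ) : ℂ))) ^ 2)) with hF'
    have hderiv : ∀ s ∈ Icc n (n+1), HasDerivWithinAt F (F' s) (Icc n (n+1)) s := by
      intro s hs
      exact (aux_deriv A B α β ζ hnz hB (lt_of_lt_of_le hn0 hs.1)).hasDerivWithinAt
    have hbnd : ∀ s ∈ Icc n (n+1), ‖F' s‖ ≤ D0 * (n^(-α-1)/x) := by
      intro s hs
      have hs1 : 1 ≤ s := le_trans hn hs.1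
      refine le_trans (aux_deriv_bound A B α β m x hA hB hα0 hβ hm hx ζ hxζ hsec hs1) ?_
      have : s^(-α-1) ≤ n^(-α-1) :=
        Real.rpow_le_rpow_of_nonpos hn0 hs.1 (by linarith)
      have hD00 : 0 ≤ D0 := by positivity
      apply mul_le_mul_of_nonneg_left ?_ hD00
      gcongr
    have hlip : ∀ t ∈ Ioc n (n+1), ‖F t - F n‖ ≤ D0 * (n^(-α-1)/x) := by
      intro t ht
      have h1 := Convex.norm_image_sub_le_of_norm_hasDerivWithin_le hderiv hbnd
        (convex_Icc _ _) (⟨le_refl n, by linarith⟩ : n ∈ Icc n (n+1)) (⟨ht.1.le, ht.2⟩ : t ∈ Icc n (n+1))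
      refine le_trans h1 ?_
      have : ‖t - n‖ ≤ 1 := by
        rw [Real.norm_eq_abs, abs_of_nonneg (by linarith [ht.1.le] : (0:ℝ) ≤ t - n)]
        linarith [ht.2]
      calc D0 * (n^(-α-1)/x) * ‖t - n‖ ≤ D0 * (n^(-α-1)/x) * 1 := by
            apply mul_le_mul_of_nonneg_left this (by positivity)
        _ = D0 * (n^(-α-1)/x) := mul_one _
    have hμ : volume (Ioc n (n+1)) = 1 := by
      rw [Real.volume_Ioc]; norm_num
    have hμlt : volume (Ioc n (n+1)) < ⊤ := by rw [hμ]; exact ENNReal.one_lt_top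
    have hconstint : IntegrableOn (fun _ : ℝ => F n) (Ioc n (n+1)) volume :=
      integrableOn_const hμlt.ne
    have hFn : ∫ _ in Ioc n (n+1), F n = F n := by
      rw [setIntegral_const, measureReal_def, hμ]; simp
    have hsub : F n - ∫ t in Ioc n (n+1), F t = ∫ t in Ioc n (n+1), (F n - F t) := by
      rw [integral_sub hconstint hint, hFn]
    rw [hsub]
    have := norm_setIntegral_le_of_norm_le_const (μ := volume) (s := Ioc n (n+1))
      (f := fun t => F n - F t) hμlt
      (fun t ht => by rw [norm_sub_rev]; exact hlip t ht)
    rw [measureReal_def, hμ] at this; simpa using this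
  calc ‖(ck:ℂ)/(ζ+(γk:ℂ)) - ∫ t in Ioc n (n+1), F t‖
      ≤ ‖(ck:ℂ)/(ζ+(γk:ℂ)) - ((A/n^α : ℝ):ℂ)/(ζ+(γk:ℂ))‖ +
        ‖((A/n^α : ℝ):ℂ)/(ζ+(γk:ℂ)) - F n‖ + ‖F n - ∫ t in Ioc n (n+1), F t‖ := by
        have := norm_sub_le_norm_sub_add_norm_sub ((ck:ℂ)/(ζ+(γk:ℂ))) (((A/n^α : ℝ):ℂ)/(ζ+(γk:ℂ))) (∫ t in Ioc n (n+1), F t)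
        have h2 := norm_sub_le_norm_sub_add_norm_sub (((A/n^α : ℝ):ℂ)/(ζ+(γk:ℂ))) (F n) (∫ t in Ioc n (n+1), F t)
        linarith
    _ ≤ (Cc/m)*(n^(-α-1)/x) + (A*Cγ/(m^2*B))*(n^(-α-1)/x) + ((A*α/m + A*β/m^2))*(n^(-α-1)/x) := by
        exact add_le_add (add_le_add ha hb) hc
    _ = (Cc/m + A*Cγ/(m^2*B) + (A*α/m + A*β/m^2)) * (n^(-α-1)/x) := by ring

lemma aux_union : Ioi (1:ℝ) = ⋃ k : ℕ, Ioc ((k:ℝ)+1) ((k:ℝ)+2) := by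
  ext t
  simp only [mem_Ioi, mem_iUnion, mem_Ioc]
  constructor
  · intro ht
    refine ⟨⌈t - 1⌉₊ - 1, ?_, ?_⟩
    · have h1 : (1:ℕ) ≤ ⌈t - 1⌉₊ := Nat.one_le_ceil_iff.mpr (by linarith)
      have h2 : (⌈t - 1⌉₊ : ℝ) < (t - 1) + 1 := Nat.ceil_lt_add_one (by linarith)
      have h3 : ((⌈t - 1⌉₊ - 1 : ℕ) : ℝ) = (⌈t - 1⌉₊ : ℝ) - 1 := by
        push_cast [h1]; ring
      rw [h3]; linarith
    · have h1 : (1:ℕ) ≤ ⌈t - 1⌉₊ := Nat.one_le_ceil_iff.mpr (by linarith)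
      have h2 : t - 1 ≤ (⌈t - 1⌉₊ : ℝ) := Nat.le_ceil _
      have h3 : ((⌈t - 1⌉₊ - 1 : ℕ) : ℝ) = (⌈t - 1⌉₊ : ℝ) - 1 := by
        push_cast [h1]; ring
      rw [h3]; linarith
  · rintro ⟨k, hk1, _⟩
    have : (0:ℝ) ≤ (k:ℝ) := Nat.cast_nonneg k
    linarith

lemma aux_disjoint : Pairwise (Function.onFun Disjoint fun k : ℕ => Ioc ((k:ℝ)+1) ((k:ℝ)+2)) := by
  intro i j hij
  rcases lt_or_gt_of_ne hij with h | h
  · apply Set.disjoint_left.mpr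
    intro t hti htj
    have h1 : (i:ℝ) + 1 ≤ (j:ℝ) := by exact_mod_cast Nat.succ_le_of_lt h
    exact absurd htj.1 (by simp only [not_lt]; linarith [hti.2])
  · apply Set.disjoint_left.mpr
    intro t hti htj
    have h1 : (j:ℝ) + 1 ≤ (i:ℝ) := by exact_mod_cast Nat.succ_le_of_lt h
    exact absurd hti.1 (by simp only [not_lt]; linarith [htj.2])

end Stmt14Aux

open Real Set in

/-- Approximation of `K̂(ζ) = ∑ c k/(ζ+γ k)` by the integral
`h(ζ) = ∫₁^∞ A/(t^α (ζ + B t^β)) dt`: for every `δ > 0` there is `C > 0` with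
`|K̂(ζ) - h(ζ)| ≤ C/|ζ|` on the sector `|arg ζ| < π - δ`, `|ζ| ≥ 1`. Here the
sequences are indexed so that `c k = A/(k+1)^α + O(1/(k+1)^{α+1})` and
`γ k = B (k+1)^β + O((k+1)^{β-1})`. -/
theorem stmt14 (A B α β : ℝ) (hA : 0 < A) (hB : 0 < B) (hα0 : 0 < α) (hα1 : α ≤ 1)
    (hβ : 0 < β) (hαβ : 1 < α + β)
    (c γ : ℕ → ℝ) (hc : ∀ k, 0 < c k) (hγpos : ∀ k, 0 < γ k) (hmono : StrictMono γ)
    (hca : ∃ C, ∀ k : ℕ, |c k - A / ((k : ℝ) + 1) ^ α| ≤ C / ((k : ℝ) + 1) ^ (α + 1))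
    (hγa : ∃ C, ∀ k : ℕ, |γ k - B * ((k : ℝ) + 1) ^ β| ≤ C * ((k : ℝ) + 1) ^ (β - 1))
    (hsumratio : Summable fun k => c k / γ k) (hS : (∑' k, c k / γ k) < 1)
    (δ : ℝ) (hδ : 0 < δ) :
    ∃ C > 0, ∀ ζ : ℂ, |Complex.arg ζ| < Real.pi - δ → 1 ≤ ‖ζ‖ →
      ‖(∑' k, (c k : ℂ) / (ζ + (γ k : ℂ))) -
          ∫ t in Set.Ioi (1 : ℝ),
            (A : ℂ) / (((t ^ α : ℝ) : ℂ) * (ζ + ((B * t ^ β : ℝ) : ℂ)))‖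
        ≤ C / ‖ζ‖ := by
  by_cases hδπ : δ < π
  case neg =>
    refine ⟨1, one_pos, fun ζ harg _ => absurd harg (not_lt.mpr ?_)⟩
    have := abs_nonneg ζ.arg
    push_neg at hδπ
    linarith
  obtain ⟨Cc, hca⟩ := hca
  obtain ⟨Cγ, hγa⟩ := hγa
  have hCc0 : 0 ≤ Cc := by
    have := le_trans (abs_nonneg _) (hca 0)
    rw [show ((0:ℕ):ℝ) + 1 = 1 by norm_num, Real.one_rpow] at this
    linarith
  have hCγ0 : 0 ≤ Cγ := by
    have := le_trans (abs_nonneg _) (hγa 0)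
    rw [show ((0:ℕ):ℝ) + 1 = 1 by norm_num, Real.one_rpow] at this
    linarith
  set m := Real.sqrt ((1 - Real.cos δ)/2) with hmdef
  have hc1 : Real.cos δ < 1 := by
    have := Real.strictAntiOn_cos (by constructor <;> [rfl; exact Real.pi_pos.le])
      (by constructor <;> linarith) hδ
    simpa using this
  have hm : 0 < m := Real.sqrt_pos.mpr (by linarith)
  set D := Cc/m + A*Cγ/(m^2*B) + (A*α/m + A*β/m^2) with hD
  have hD0 : 0 ≤ D := by positivity
  have hSsum : Summable (fun k : ℕ => ((k:ℝ)+1)^(-α-1)) := by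
    have h1 : Summable (fun n : ℕ => 1/(n:ℝ)^(α+1)) :=
      Real.summable_one_div_nat_rpow.mpr (by linarith)
    have h2 := h1.comp_injective Nat.succ_injective
    apply h2.congr
    intro k
    simp only [Function.comp_apply]
    rw [show -α-1 = -(α+1) by ring, Real.rpow_neg (by positivity)]
    rw [one_div]
    congr 2
    push_cast; ring
  set S := ∑' k : ℕ, ((k:ℝ)+1)^(-α-1) with hSdef
  have hS0 : 0 ≤ S := tsum_nonneg (fun k => by positivity)
  refine ⟨max 1 (D*S), lt_of_lt_of_le one_pos (le_max_left _ _), ?_⟩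
  intro ζ harg hxn
  have hx0 : (0:ℝ) < ‖ζ‖ := lt_of_lt_of_le one_pos hxn
  have hsec : ∀ s : ℝ, 0 ≤ s → m * (‖ζ‖ + s) ≤ ‖ζ + (s:ℂ)‖ :=
    fun s hs => aux_sector hδ hδπ harg.le hxn hs
  have hnz : ∀ s : ℝ, 0 ≤ s → ζ + (s:ℂ) ≠ 0 := by
    intro s hs h0
    have h2 := hsec s hs
    rw [h0, norm_zero] at h2
    nlinarith
  set F : ℝ → ℂ := fun t => (A:ℂ)/(((t^α : ℝ):ℂ)*(ζ+((B*t^β : ℝ):ℂ))) with hFdef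
  -- continuity on Ioi 0
  have hcont : ContinuousOn F (Ioi (0:ℝ)) := by
    apply ContinuousOn.div continuousOn_const
    · apply ContinuousOn.mul
      · exact Complex.continuous_ofReal.comp_continuousOn
          (continuousOn_id.rpow_const (fun t ht => Or.inl (ne_of_gt ht)))
      · apply continuousOn_const.add
        exact Complex.continuous_ofReal.comp_continuousOn
          ((continuousOn_id.rpow_const (fun t ht => Or.inl (ne_of_gt ht))).const_smul B)
    · intro t ht
      apply mul_ne_zero
      · simp only [ne_eq, Complex.ofReal_eq_zero]
        exact ne_of_gt (Real.rpow_pos_of_pos ht _)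
      · have ht' := mem_Ioi.mp ht
        exact hnz _ (by positivity)
  have hmeasF : AEStronglyMeasurable F (volume.restrict (Ioi (1:ℝ))) :=
    (hcont.mono (fun t (ht : t ∈ Ioi (1:ℝ)) => mem_Ioi.mpr (by linarith [mem_Ioi.mp ht]))).aestronglyMeasurable
      measurableSet_Ioi
  have hFbound : ∀ t ∈ Ioi (1:ℝ), ‖F t‖ ≤ (A/(m*B)) * t^(-(α+β)) := by
    intro t ht
    have ht1 : (1:ℝ) < t := mem_Ioi.mp ht
    have ht0 : (0:ℝ) < t := by linarith
    have htα : (0:ℝ) < t^α := Real.rpow_pos_of_pos ht0 _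
    have htβ : (0:ℝ) < t^β := Real.rpow_pos_of_pos ht0 _
    have hq : m*(B*t^β) ≤ ‖ζ+((B*t^β : ℝ):ℂ)‖ := by
      have hb : (0:ℝ) < B*t^β := by positivity
      exact le_trans (by nlinarith) (hsec _ hb.le)
    rw [hFdef]
    simp only [norm_div, norm_mul, Complex.norm_real, Real.norm_eq_abs,
      abs_of_pos hA, abs_of_pos htα]
    calc A / (t^α * ‖ζ+((B*t^β : ℝ):ℂ)‖) ≤ A / (t^α * (m*(B*t^β))) := by
          apply div_le_div_of_nonneg_left hA.le (by positivity)
          apply mul_le_mul_of_nonneg_left hq htα.le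
      _ = (A/(m*B)) * t^(-(α+β)) := by
          rw [Real.rpow_neg ht0.le, Real.rpow_add ht0]
          ring
  have hFint : IntegrableOn F (Ioi (1:ℝ)) volume := by
    apply Integrable.mono' ((integrableOn_Ioi_rpow_of_lt (show -(α+β) < -1 by linarith)
      one_pos).const_mul (A/(m*B))) hmeasF
    exact (ae_restrict_iff' measurableSet_Ioi).mpr (ae_of_all _ hFbound)
  have hIsum : HasSum (fun k : ℕ => ∫ t in Ioc ((k:ℝ)+1) ((k:ℝ)+2), F t) (∫ t in Ioi (1:ℝ), F t) := by
    rw [aux_union] at hFint ⊢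
    exact hasSum_integral_iUnion (fun k => measurableSet_Ioc) aux_disjoint hFint
  set I : ℕ → ℂ := fun k => ∫ t in Ioc ((k:ℝ)+1) ((k:ℝ)+2), F t with hIdef
  set g : ℕ → ℂ := fun k => (c k:ℂ)/(ζ+(γ k:ℂ)) with hgdef
  have hgnorm : ∀ k, ‖g k‖ ≤ (1/m) * (c k/γ k) := by
    intro k
    have hγk := hγpos k
    have hck := hc k
    have hden : m * γ k ≤ ‖ζ+(γ k:ℂ)‖ := le_trans (by nlinarith) (hsec _ hγk.le)
    rw [hgdef]
    simp only [norm_div, Complex.norm_real, Real.norm_eq_abs, abs_of_pos hck]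
    calc c k / ‖ζ+(γ k:ℂ)‖ ≤ c k / (m*γ k) := by
          apply div_le_div_of_nonneg_left hck.le (by positivity) hden
      _ = (1/m)*(c k/γ k) := by field_simp
  have hgsum : Summable g :=
    Summable.of_norm_bounded (hsumratio.mul_left (1/m)) hgnorm
  have hterm : ∀ k : ℕ, ‖g k - I k‖ ≤ D * (((k:ℝ)+1)^(-α-1)/‖ζ‖) := by
    intro k
    have hsub : Ioc ((k:ℝ)+1) ((k:ℝ)+2) ⊆ Ioi (1:ℝ) := by
      intro t ht
      have : (0:ℝ) ≤ (k:ℝ) := Nat.cast_nonneg k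
      exact mem_Ioi.mpr (by linarith [ht.1])
    have e2 : ((k:ℝ)+1)+1 = (k:ℝ)+2 := by ring
    have := aux_term A B α β m (‖ζ‖) Cc Cγ hA hB hα0 hβ hm hxn hCc0 hCγ0 ζ rfl hsec
      (c k) (γ k) ((k:ℝ)+1) (hγpos k) (by have h := Nat.cast_nonneg (α := ℝ) k; linarith) (hca k) (hγa k)
      (by rw [e2]; exact hFint.mono_set hsub)
    rw [e2] at this
    simpa only [hD] using this
  have hterm' : ∀ k : ℕ, ‖g k - I k‖ ≤ (D/‖ζ‖) * (((k:ℝ)+1)^(-α-1)) := by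
    intro k
    refine le_trans (hterm k) (le_of_eq ?_)
    rw [div_mul_eq_mul_div, mul_div_assoc]
  have hbsum : Summable (fun k : ℕ => (D/‖ζ‖) * (((k:ℝ)+1)^(-α-1))) :=
    hSsum.mul_left _
  have hnsum : Summable (fun k : ℕ => ‖g k - I k‖) :=
    Summable.of_nonneg_of_le (fun k => norm_nonneg _) hterm' hbsum
  calc ‖(∑' k, g k) - ∫ t in Ioi (1:ℝ), F t‖
      = ‖∑' k, (g k - I k)‖ := by
        rw [Summable.tsum_sub hgsum hIsum.summable, hIsum.tsum_eq]
    _ ≤ ∑' k, ‖g k - I k‖ := norm_tsum_le_tsum_norm hnsum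
    _ ≤ ∑' k : ℕ, (D/‖ζ‖) * (((k:ℝ)+1)^(-α-1)) := Summable.tsum_le_tsum hterm' hnsum hbsum
    _ = D * S / ‖ζ‖ := by
        rw [tsum_mul_left]
        ring
    _ ≤ max 1 (D*S) / ‖ζ‖ := by
        apply div_le_div_of_nonneg_right (le_max_right _ _) hx0.le
end

section
/- Suppose $\gamma_{N}/( \gamma_{N+1} - \gamma_N) \leq C_1 B N^{p}$ eventually (which follows from $\gamma_k = Bk^\beta + O(k^{\beta-1})$ and $\gamma_{k+1}-\gamma_k \asymp k^{\beta-p}$). Then with $X_N = (\gamma_N+\gamma_{N+1})/2$, for every $a > 0$ and $\xi \in (0,1)$: $q(X_N) := 1 + \frac{1}{a^{2(1-\xi)}}\sum_{k=1}^{\infty}\frac{c_k}{|X_N - \gamma_k|} \leq \frac{2C_1 B N^{p} S}{a^{2(1-\xi)}} + 1$, where $S = \sum_k c_k/\gamma_k$; and consequently $q(X_N)/X_N^2 \to 0$ as $N \to \infty$ whenever $p < 2\beta$. -/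
set_option maxHeartbeats 4000000


open Filter

/-- If eventually `γ N / (γ (N+1) - γ N) ≤ C₁ B N^p` (as follows from
`γ k = B k^β + O(k^{β-1})` and `γ_{k+1} - γ k ≍ k^{β-p}`), then with
`X_N = (γ N + γ (N+1))/2` and `q(X_N) = 1 + a^{-2(1-ξ)} ∑ c k / |X_N - γ k|`,
eventually `q(X_N) ≤ 2C₁ B N^p S / a^{2(1-ξ)} + 1` where `S = ∑ c k/γ k`, and
`q(X_N)/X_N² → 0` as `N → ∞` (since `p < 2β`). -/
theorem stmt18 (B β p C1 : ℝ) (hB : 0 < B) (hβ : 0 < β) (hp : 1 ≤ p) (hpβ : p < 2 * β)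
    (hC1 : 0 < C1) (γ c : ℕ → ℝ) (hγpos : ∀ k, 0 < γ k) (hmono : StrictMono γ)
    (hγa : ∃ C, ∀ k : ℕ, 1 ≤ k → |γ k - B * (k : ℝ) ^ β| ≤ C * (k : ℝ) ^ (β - 1))
    (hgap : ∃ D1 > 0, ∃ D2 > 0, ∀ᶠ k : ℕ in atTop,
      D1 * (k : ℝ) ^ (β - p) ≤ γ (k + 1) - γ k ∧
      γ (k + 1) - γ k ≤ D2 * (k : ℝ) ^ (β - p))
    (hc : ∀ k, 0 < c k) (hS : Summable fun k => c k / γ k)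
    (hratio : ∀ᶠ N : ℕ in atTop, γ N / (γ (N + 1) - γ N) ≤ C1 * B * (N : ℝ) ^ p)
    (a ξ : ℝ) (ha : 0 < a) (hξ : ξ ∈ Set.Ioo (0 : ℝ) 1) :
    (∀ᶠ N : ℕ in atTop,
      1 + (1 / a ^ (2 * (1 - ξ))) *
          (∑' k, c k / |(γ N + γ (N + 1)) / 2 - γ k|)
        ≤ 2 * C1 * B * (N : ℝ) ^ p * (∑' k, c k / γ k) / a ^ (2 * (1 - ξ)) + 1) ∧
    Tendsto (fun N : ℕ =>
        (1 + (1 / a ^ (2 * (1 - ξ))) *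
            (∑' k, c k / |(γ N + γ (N + 1)) / 2 - γ k|)) /
          ((γ N + γ (N + 1)) / 2) ^ 2)
      atTop (nhds 0) := by
  obtain ⟨C, hC⟩ := hγa
  obtain ⟨D1, hD1, D2, hD2, hgap'⟩ := hgap
  obtain ⟨hξ0, hξ1⟩ := hξ
  have hap : (0:ℝ) < a ^ (2 * (1 - ξ)) := Real.rpow_pos_of_pos ha _
  set apow := a ^ (2 * (1 - ξ)) with hapow
  set S := ∑' k, c k / γ k with hSdef
  have hterm : ∀ k, 0 < c k / γ k := fun k => div_pos (hc k) (hγpos k)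
  have hS0 : 0 < S := Summable.tsum_pos hS (fun k => (hterm k).le) 0 (hterm 0)
  -- tail sums
  set T : ℕ → ℝ := fun N => ∑' k, c (k + (N + 1)) / γ (k + (N + 1)) with hTdef
  have hTsummable : ∀ N : ℕ, Summable fun k => c (k + (N + 1)) / γ (k + (N + 1)) :=
    fun N => (summable_nat_add_iff (N + 1)).2 hS
  have hT0 : ∀ N, 0 ≤ T N := fun N => tsum_nonneg fun k => (hterm _).le
  have hTtend : Tendsto T atTop (nhds 0) :=
    (tendsto_sum_nat_add (fun k => c k / γ k)).comp (tendsto_add_atTop_nat 1)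
  clear_value apow S T
  -- eventual facts
  have hNat : Tendsto (fun N : ℕ => (N : ℝ)) atTop atTop := tendsto_natCast_atTop_atTop
  have hE1 : ∀ᶠ N : ℕ in atTop, C ≤ B / 2 * (N : ℝ) :=
    (hNat.const_mul_atTop (by positivity : (0:ℝ) < B / 2)).eventually_ge_atTop C
  have hE4 : ∀ᶠ N : ℕ in atTop, 4 * γ 0 / B ≤ (N : ℝ) ^ β :=
    (((tendsto_rpow_atTop hβ).comp hNat).eventually_ge_atTop _)
  have hE5 : ∀ᶠ N : ℕ in atTop, T N ≤ B * c 0 / (4 * D2 * γ 0) := by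
    have hpos : (0:ℝ) < B * c 0 / (4 * D2 * γ 0) := by
      have := hγpos 0; have := hc 0; positivity
    exact hTtend.eventually (ge_mem_nhds hpos)
  have hN1 : ∀ᶠ N : ℕ in atTop, 1 ≤ N := eventually_ge_atTop 1
  -- lower bound on γ N
  have hγlb : ∀ N : ℕ, 1 ≤ N → C ≤ B / 2 * (N : ℝ) → B / 2 * (N : ℝ) ^ β ≤ γ N := by
    intro N h1 hCN
    have hx : (0:ℝ) < (N : ℝ) := by exact_mod_cast Nat.pos_of_ne_zero (by omega)
    have hxb : (0:ℝ) < (N : ℝ) ^ (β - 1) := Real.rpow_pos_of_pos hx _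
    have habs := abs_le.1 (hC N h1)
    have hsplit : (N : ℝ) ^ β = (N : ℝ) * (N : ℝ) ^ (β - 1) := by
      rw [show β = 1 + (β - 1) by ring, Real.rpow_add hx, Real.rpow_one]
      ring_nf
    have hCb : C * (N : ℝ) ^ (β - 1) ≤ B / 2 * (N : ℝ) ^ β := by
      rw [hsplit]
      calc C * (N : ℝ) ^ (β - 1) ≤ (B / 2 * (N : ℝ)) * (N : ℝ) ^ (β - 1) :=
            mul_le_mul_of_nonneg_right hCN hxb.le
        _ = B / 2 * ((N : ℝ) * (N : ℝ) ^ (β - 1)) := by ring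
    linarith [habs.1]
  -- KEY estimate
  have key : ∀ᶠ N : ℕ in atTop,
      (∑' k, c k / |(γ N + γ (N + 1)) / 2 - γ k|) ≤ 2 * C1 * B * (N : ℝ) ^ p * S := by
    filter_upwards [hratio, hgap', hE1, hE4, hE5, hN1] with N hrat hgapN hCN h4 hT5 h1
    have hx : (0:ℝ) < (N : ℝ) := by exact_mod_cast Nat.pos_of_ne_zero (by omega)
    have hx1 : (1:ℝ) ≤ (N : ℝ) := by exact_mod_cast h1
    have hd : (0:ℝ) < γ (N + 1) - γ N := sub_pos.2 (hmono (Nat.lt_succ_self N))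
    set d := γ (N + 1) - γ N with hddef
    set X := (γ N + γ (N + 1)) / 2 with hXdef
    clear_value d X
    have hγNlb : B / 2 * (N : ℝ) ^ β ≤ γ N := hγlb N h1 hCN
    have hXN : X - γ N = d / 2 := by rw [hXdef, hddef]; ring
    have hXN1 : γ (N + 1) - X = d / 2 := by rw [hXdef, hddef]; ring
    have hγ0N : γ 0 ≤ γ N := hmono.monotone (Nat.zero_le N)
    have hγNsucc : γ N < γ (N + 1) := hmono (Nat.lt_succ_self N)
    -- pointwise bound
    set g : ℕ → ℝ := fun k =>
      if k = 0 then 2 * c 0 / d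
      else if k ≤ N then 2 * γ N / d * (c k / γ k)
      else 2 * γ (N + 1) / d * (c k / γ k) with hgdef
    clear_value g
    have hfg : ∀ k, c k / |X - γ k| ≤ g k := by
      intro k
      rcases eq_or_ne k 0 with rfl | hk0
      · have hpos : 0 < X - γ 0 := by linarith
        rw [abs_of_pos hpos]
        simp only [hgdef, if_pos rfl]
        rw [div_le_div_iff₀ hpos hd,
          show X = γ N + d / 2 by rw [hXdef, hddef]; ring]
        nlinarith [mul_nonneg (hc 0).le (sub_nonneg.2 hγ0N)]
      · by_cases hkN : k ≤ N
        · have hγkN : γ k ≤ γ N := hmono.monotone hkN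
          have hpos : 0 < X - γ k := by linarith
          rw [abs_of_pos hpos]
          simp only [hgdef, if_neg hk0, if_pos hkN]
          rw [div_mul_div_comm, div_le_div_iff₀ hpos (mul_pos hd (hγpos k)),
            show X = γ N + d / 2 by rw [hXdef, hddef]; ring]
          nlinarith [mul_nonneg (mul_nonneg (hc k).le (sub_nonneg.2 hγkN))
            (by linarith [hγpos N] : (0:ℝ) ≤ 2 * γ N + d)]
        · push_neg at hkN
          have hγk : γ (N + 1) ≤ γ k := hmono.monotone hkN
          have hpos : 0 < γ k - X := by linarith
          rw [abs_sub_comm, abs_of_pos hpos]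
          simp only [hgdef, if_neg hk0, if_neg (by omega : ¬ k ≤ N)]
          rw [div_mul_div_comm, div_le_div_iff₀ hpos (mul_pos hd (hγpos k)),
            show X = γ N + d / 2 by rw [hXdef, hddef]; ring,
            show γ (N + 1) = γ N + d by rw [hddef]; ring]
          have hγk' : 0 ≤ γ k - (γ N + d) := by
            rw [show γ N + d = γ (N + 1) by rw [hddef]; ring]
            linarith
          nlinarith [mul_nonneg (mul_nonneg (hc k).le hγk')
            (by linarith [hγpos N] : (0:ℝ) ≤ 2 * γ N + d)]
    -- summability
    have hγN1pos := hγpos (N + 1)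
    have hγNpos := hγpos N
    have hγ0pos := hγpos 0
    have hh : Summable fun k => 2 * γ (N + 1) / d * (c k / γ k) := hS.mul_left _
    have hgh : ∀ k, g k ≤ 2 * γ (N + 1) / d * (c k / γ k) := by
      intro k
      rcases eq_or_ne k 0 with rfl | hk0
      · simp only [hgdef, if_pos rfl]
        rw [div_mul_div_comm, div_le_div_iff₀ hd (mul_pos hd hγ0pos)]
        nlinarith [mul_nonneg (mul_nonneg hd.le (hc 0).le)
          (sub_nonneg.2 (le_trans hγ0N hγNsucc.le))]
      · by_cases hkN : k ≤ N
        · simp only [hgdef, if_neg hk0, if_pos hkN]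
          have h2 : 2 * γ N / d ≤ 2 * γ (N + 1) / d :=
            (div_le_div_iff_of_pos_right hd).2 (by linarith)
          exact mul_le_mul_of_nonneg_right h2 (hterm k).le
        · simp only [hgdef, if_neg hk0, if_neg hkN]
          exact le_rfl
    have hgnn : ∀ k, 0 ≤ g k := fun k =>
      le_trans (div_nonneg (hc k).le (abs_nonneg _)) (hfg k)
    have hgsum : Summable g := Summable.of_nonneg_of_le hgnn hgh hh
    have hfsum : Summable (fun k => c k / |X - γ k|) :=
      Summable.of_nonneg_of_le (fun k => div_nonneg (hc k).le (abs_nonneg _)) hfg hgsum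
    have step1 : (∑' k, c k / |X - γ k|) ≤ ∑' k, g k := Summable.tsum_le_tsum hfg hfsum hgsum
    -- compute tsum g
    set P : ℝ := ∑ i ∈ Finset.range N, c (i + 1) / γ (i + 1) with hPdef
    clear_value P
    have htail : (∑' i, g (i + (N + 1))) = 2 * γ (N + 1) / d * T N := by
      simp only [hTdef]
      rw [← tsum_mul_left]
      apply tsum_congr
      intro i
      simp only [hgdef]
      rw [if_neg (by omega), if_neg (by omega)]
    have hhead : (∑ i ∈ Finset.range (N + 1), g i) = 2 * γ N / d * P + 2 * c 0 / d := by
      rw [Finset.sum_range_succ']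
      have : ∀ i ∈ Finset.range N, g (i + 1) = 2 * γ N / d * (c (i + 1) / γ (i + 1)) := by
        intro i hi
        simp only [Finset.mem_range] at hi
        simp only [hgdef]
        rw [if_neg (by omega), if_pos (by omega)]
      rw [Finset.sum_congr rfl this, ← Finset.mul_sum]
      have hg0 : g 0 = 2 * c 0 / d := by simp only [hgdef, if_pos rfl]
      rw [hg0, ← hPdef]
    have hgval : (∑' k, g k) = 2 * γ N / d * P + 2 * c 0 / d + 2 * γ (N + 1) / d * T N := by
      rw [← Summable.sum_add_tsum_nat_add (N + 1) hgsum, htail, hhead]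
    have hSval : S = P + c 0 / γ 0 + T N := by
      rw [hSdef, ← Summable.sum_add_tsum_nat_add (N + 1) hS, Finset.sum_range_succ']
      simp only [hTdef, hPdef]
      try ring
    -- the slack inequality : d * T N * γ 0 ≤ c 0 * (γ N - γ 0)
    have hxb : (0:ℝ) < (N : ℝ) ^ β := Real.rpow_pos_of_pos hx _
    have hγ0ub : γ 0 ≤ B / 4 * (N : ℝ) ^ β := by
      have := (div_le_iff₀ hB).1 h4
      linarith
    have hdub : d ≤ D2 * (N : ℝ) ^ β := by
      have h5 : (N:ℝ) ^ (β - p) ≤ (N:ℝ) ^ β :=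
        Real.rpow_le_rpow_of_exponent_le hx1 (by linarith)
      calc d ≤ D2 * (N : ℝ) ^ (β - p) := hgapN.2
        _ ≤ D2 * (N : ℝ) ^ β := by nlinarith
    have hslack : d * T N * γ 0 ≤ c 0 * (γ N - γ 0) := by
      have h6 : d * T N ≤ (D2 * (N : ℝ) ^ β) * T N :=
        mul_le_mul_of_nonneg_right hdub (hT0 N)
      have h7 : (D2 * (N : ℝ) ^ β) * T N ≤ (D2 * (N : ℝ) ^ β) * (B * c 0 / (4 * D2 * γ 0)) := by
        apply mul_le_mul_of_nonneg_left hT5 (by positivity)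
      have h8 : (D2 * (N : ℝ) ^ β) * (B * c 0 / (4 * D2 * γ 0)) * γ 0
          = B * (N : ℝ) ^ β * c 0 / 4 := by
        field_simp
      have h9 : d * T N * γ 0 ≤ B * (N : ℝ) ^ β * c 0 / 4 := by
        rw [← h8]
        exact mul_le_mul_of_nonneg_right (le_trans h6 h7) hγ0pos.le
      have h10 : B * (N : ℝ) ^ β * c 0 / 4 ≤ c 0 * (γ N - γ 0) := by
        nlinarith [hc 0]
      linarith
    have step2 : (∑' k, g k) ≤ 2 * γ N / d * S := by
      rw [hgval, hSval]
      have hdiff : 2 * γ N / d * (P + c 0 / γ 0 + T N)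
          - (2 * γ N / d * P + 2 * c 0 / d + 2 * γ (N + 1) / d * T N)
          = 2 * (c 0 * (γ N - γ 0) - d * T N * γ 0) / (d * γ 0) := by
        have hγN1d : γ (N + 1) = γ N + d := by rw [hddef]; ring
        rw [hγN1d]
        field_simp
        ring
      linarith [div_nonneg (by linarith : (0:ℝ) ≤ 2 * (c 0 * (γ N - γ 0) - d * T N * γ 0))
        (mul_pos hd hγ0pos).le, hdiff]
    have step3 : 2 * γ N / d * S ≤ 2 * C1 * B * (N : ℝ) ^ p * S := by
      have h12 := mul_le_mul_of_nonneg_right hrat hS0.le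
      calc 2 * γ N / d * S = 2 * (γ N / d * S) := by ring
        _ ≤ 2 * (C1 * B * (N : ℝ) ^ p * S) := by linarith
        _ = 2 * C1 * B * (N : ℝ) ^ p * S := by ring
    calc (∑' k, c k / |X - γ k|) ≤ ∑' k, g k := step1
      _ ≤ 2 * γ N / d * S := step2
      _ ≤ 2 * C1 * B * (N : ℝ) ^ p * S := step3
  -- conclusion part 1
  have part1 : ∀ᶠ N : ℕ in atTop,
      1 + (1 / apow) * (∑' k, c k / |(γ N + γ (N + 1)) / 2 - γ k|)
        ≤ 2 * C1 * B * (N : ℝ) ^ p * S / apow + 1 := by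
    filter_upwards [key] with N hN
    have h1 : (1 / apow) * (∑' k, c k / |(γ N + γ (N + 1)) / 2 - γ k|)
        ≤ 2 * C1 * B * (N : ℝ) ^ p * S / apow := by
      rw [one_div, inv_mul_eq_div]
      exact (div_le_div_iff_of_pos_right hap).2 hN
    linarith
  refine ⟨part1, ?_⟩
  -- part 2 : tendsto
  have hE1' := hE1
  have qnn : ∀ N : ℕ, 0 ≤ (1 + (1 / apow) *
      (∑' k, c k / |(γ N + γ (N + 1)) / 2 - γ k|)) := by
    intro N
    have : 0 ≤ (∑' k, c k / |(γ N + γ (N + 1)) / 2 - γ k|) :=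
      tsum_nonneg fun k => div_nonneg (hc k).le (abs_nonneg _)
    positivity
  apply squeeze_zero' (g := fun N : ℕ =>
      (2 * C1 * B * (N : ℝ) ^ p * S / apow + 1) / (B / 2 * (N : ℝ) ^ β) ^ 2)
  · exact Eventually.of_forall fun N => div_nonneg (qnn N) (sq_nonneg _)
  · filter_upwards [part1, hE1, hN1] with N hP hCN h1
    have hx : (0:ℝ) < (N : ℝ) := by exact_mod_cast Nat.pos_of_ne_zero (by omega)
    have hxb : (0:ℝ) < (N : ℝ) ^ β := Real.rpow_pos_of_pos hx _
    have hγNlb : B / 2 * (N : ℝ) ^ β ≤ γ N := hγlb N h1 hCN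
    have hXlb : B / 2 * (N : ℝ) ^ β ≤ (γ N + γ (N + 1)) / 2 := by
      have := hmono (Nat.lt_succ_self N)
      linarith
    have hq : 0 < B / 2 * (N : ℝ) ^ β := by positivity
    have hXpos : (0:ℝ) < ((γ N + γ (N + 1)) / 2) ^ 2 := by
      have := hγpos N
      have := hγpos (N + 1)
      positivity
    have s1 : (1 + (1 / apow) * (∑' k, c k / |(γ N + γ (N + 1)) / 2 - γ k|))
          / ((γ N + γ (N + 1)) / 2) ^ 2
        ≤ (2 * C1 * B * (N : ℝ) ^ p * S / apow + 1) / ((γ N + γ (N + 1)) / 2) ^ 2 :=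
      (div_le_div_iff_of_pos_right hXpos).2 hP
    have s2 : (2 * C1 * B * (N : ℝ) ^ p * S / apow + 1) / ((γ N + γ (N + 1)) / 2) ^ 2
        ≤ (2 * C1 * B * (N : ℝ) ^ p * S / apow + 1) / (B / 2 * (N : ℝ) ^ β) ^ 2 :=
      div_le_div_of_nonneg_left (le_trans (qnn N) hP) (pow_pos hq 2)
        (pow_le_pow_left₀ hq.le hXlb 2)
    exact le_trans s1 s2
  · -- the dominating sequence tends to 0
    have hpos2β : (0:ℝ) < 2 * β := by linarith
    have h2βp : (0:ℝ) < 2 * β - p := by linarith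
    have t1 : Tendsto (fun N : ℕ => ((N : ℝ)) ^ (p - 2 * β)) atTop (nhds 0) := by
      have h := (tendsto_rpow_neg_atTop h2βp).comp hNat
      have he : (fun N : ℕ => ((N : ℝ)) ^ (p - 2 * β))
          = (fun x : ℝ => x ^ (-(2 * β - p))) ∘ (fun N : ℕ => (N : ℝ)) := by
        funext N
        show ((N:ℝ)) ^ (p - 2 * β) = ((N:ℝ)) ^ (-(2 * β - p))
        congr 1
        ring
      rw [he]
      exact h
    have t2 : Tendsto (fun N : ℕ => ((N : ℝ)) ^ (-(2 * β))) atTop (nhds 0) :=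
      (tendsto_rpow_neg_atTop hpos2β).comp hNat
    have tlim : Tendsto (fun N : ℕ =>
        (8 * C1 * S / (B * apow)) * ((N : ℝ)) ^ (p - 2 * β)
          + (4 / B ^ 2) * ((N : ℝ)) ^ (-(2 * β))) atTop (nhds 0) := by
      have := (t1.const_mul (8 * C1 * S / (B * apow))).add (t2.const_mul (4 / B ^ 2))
      simpa using this
    apply tlim.congr'
    filter_upwards [hN1] with N h1
    have hx : (0:ℝ) < (N : ℝ) := by exact_mod_cast Nat.pos_of_ne_zero (by omega)
    have hxb : (0:ℝ) < (N : ℝ) ^ β := Real.rpow_pos_of_pos hx _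
    have hxp : (0:ℝ) < (N : ℝ) ^ p := Real.rpow_pos_of_pos hx _
    have h2b : ((N : ℝ)) ^ (2 * β) = ((N : ℝ) ^ β) ^ 2 := by
      rw [two_mul, Real.rpow_add hx, sq]
    have hsub : ((N : ℝ)) ^ (p - 2 * β) = (N : ℝ) ^ p / ((N : ℝ) ^ β) ^ 2 := by
      rw [Real.rpow_sub hx, h2b]
    have hneg : ((N : ℝ)) ^ (-(2 * β)) = 1 / ((N : ℝ) ^ β) ^ 2 := by
      rw [Real.rpow_neg hx.le, h2b, one_div]
    rw [hsub, hneg]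
    field_simp
    ring
end
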